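/- arXiv:1608.01152 — 3 statements merged into one kernel-verified Lean document; each statement's English description precedes it below -/
import Mathlib

section
/- Let 0 → A → B →(φ) C →(ψ) D → E → 0 be an exact sequence of finitely generated abelian groups in which A is finite. Then |A| · |C_tor| · |coker(ψ_tor)| = |B_tor| · |D_tor|. -/
section aux

variable {G H : Type} [AddCommGroup G] [AddCommGroup H]

lemma aux_finord_map (f : G →+ H) {x : G} (hx : IsOfFinAddOrder x) :
    IsOfFinAddOrder (f x) := by
  rw [isOfFinAddOrder_iff_nsmul_eq_zero] at hx ⊢
  obtain ⟨n, hn, hx⟩ := hx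
  exact ⟨n, hn, by rw [← map_nsmul, hx, map_zero]⟩

/-- restriction of a hom to torsion subgroups -/
noncomputable def torRes (f : G →+ H) :
    AddCommGroup.torsion G →+ AddCommGroup.torsion H :=
  (f.comp (AddCommGroup.torsion G).subtype).codRestrict (AddCommGroup.torsion H)
    (fun x => aux_finord_map f x.2)

@[simp] lemma torRes_apply (f : G →+ H) (x : AddCommGroup.torsion G) :
    ((torRes f x : AddCommGroup.torsion H) : H) = f x := rfl

lemma card_eq_card_ker_mul_card_range (f : G →+ H) :
    Nat.card G = Nat.card f.ker * Nat.card f.range := by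
  rw [AddSubgroup.card_eq_card_quotient_mul_card_addSubgroup f.ker,
    Nat.card_congr (QuotientAddGroup.quotientKerEquivRange f).toEquiv, mul_comm]

end aux

/-- Let `0 → A → B →(φ) C →(ψ) D → E → 0` be an exact sequence of
finitely generated abelian groups in which `A` is finite. Then
`|A| ⬝ |C_tor| ⬝ |coker(ψ_tor)| = |B_tor| ⬝ |D_tor|`. -/
theorem stmt_0 {A B C D E : Type} [AddCommGroup A] [AddCommGroup B] [AddCommGroup C]
    [AddCommGroup D] [AddCommGroup E]
    [AddGroup.FG A] [AddGroup.FG B] [AddGroup.FG C] [AddGroup.FG D] [AddGroup.FG E]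
    [Finite A]
    (α : A →+ B) (φ : B →+ C) (ψ : C →+ D) (ε : D →+ E)
    (hα : Function.Injective α) (hε : Function.Surjective ε)
    (h1 : α.range = φ.ker) (h2 : φ.range = ψ.ker) (h3 : ψ.range = ε.ker) :
    Nat.card A * Nat.card (AddCommGroup.torsion C) *
      Nat.card ((AddCommGroup.torsion D) ⧸
        (((AddCommGroup.torsion C).map ψ).addSubgroupOf (AddCommGroup.torsion D))) =
    Nat.card (AddCommGroup.torsion B) * Nat.card (AddCommGroup.torsion D) := by
  set Bt := AddCommGroup.torsion B
  set Ct := AddCommGroup.torsion C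
  set Dt := AddCommGroup.torsion D
  set φ' : Bt →+ Ct := torRes φ
  set ψ' : Ct →+ Dt := torRes ψ
  -- the cokernel subgroup matches the range of ψ'
  have hrange : (Ct.map ψ).addSubgroupOf Dt = ψ'.range := by
    ext x
    simp only [AddSubgroup.mem_addSubgroupOf, AddSubgroup.mem_map, AddMonoidHom.mem_range]
    constructor
    · rintro ⟨c, hc, hcx⟩
      exact ⟨⟨c, hc⟩, Subtype.ext hcx⟩
    · rintro ⟨c, hc⟩
      exact ⟨(c : C), c.2, by rw [← hc]; rfl⟩
  -- ker ψ' = range φ'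
  have hkr : ψ'.ker = φ'.range := by
    ext x
    simp only [AddMonoidHom.mem_ker, AddMonoidHom.mem_range]
    constructor
    · intro hx
      have : ψ (x : C) = 0 := congrArg Subtype.val hx
      have hx2 : (x : C) ∈ ψ.ker := this
      rw [← h2, AddMonoidHom.mem_range] at hx2
      obtain ⟨b, hb⟩ := hx2
      -- b is torsion since φ b = x is torsion and ker φ = range α is torsion (A finite)
      have hxt : IsOfFinAddOrder (x : C) := x.2
      rw [isOfFinAddOrder_iff_nsmul_eq_zero] at hxt
      obtain ⟨n, hn, hnx⟩ := hxt
      have hnb : φ (n • b) = 0 := by rw [map_nsmul, hb, hnx]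
      have hnb2 : n • b ∈ α.range := by rw [h1]; exact hnb
      obtain ⟨a, ha⟩ := hnb2
      have hat : IsOfFinAddOrder a := isOfFinAddOrder_of_finite a
      rw [isOfFinAddOrder_iff_nsmul_eq_zero] at hat
      obtain ⟨m, hm, hma⟩ := hat
      have hbt : IsOfFinAddOrder b := by
        rw [isOfFinAddOrder_iff_nsmul_eq_zero]
        refine ⟨m * n, Nat.mul_pos hm hn, ?_⟩
        rw [mul_comm, mul_nsmul, ← ha, ← map_nsmul, hma, map_zero]
      exact ⟨⟨b, hbt⟩, Subtype.ext hb⟩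
    · rintro ⟨b, hb⟩
      apply Subtype.ext
      have : ψ (φ (b : B)) = 0 := by
        have : φ (b : B) ∈ ψ.ker := by rw [← h2]; exact ⟨b, rfl⟩
        exact this
      calc ((ψ' x : Dt) : D) = ψ (x : C) := rfl
        _ = ψ (φ (b : B)) := by rw [← congrArg Subtype.val hb]; rfl
        _ = 0 := this
  -- card of ker φ' = card A
  have hker : Nat.card φ'.ker = Nat.card A := by
    apply Nat.card_congr
    symm
    refine Equiv.ofBijective (fun a => ⟨⟨α a, ?_⟩, ?_⟩) ⟨?_, ?_⟩
    · exact aux_finord_map α (isOfFinAddOrder_of_finite a)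
    · apply Subtype.ext
      show φ (α a) = 0
      have : α a ∈ φ.ker := by rw [← h1]; exact ⟨a, rfl⟩
      exact this
    · intro a₁ a₂ h
      exact hα (congrArg (Subtype.val ∘ Subtype.val) h)
    · rintro ⟨⟨b, hbt⟩, hb⟩
      have : φ b = 0 := congrArg Subtype.val hb
      have hb2 : b ∈ α.range := by rw [h1]; exact this
      obtain ⟨a, ha⟩ := hb2
      exact ⟨a, Subtype.ext (Subtype.ext ha)⟩
  have eC : Nat.card Ct = Nat.card ψ'.ker * Nat.card ψ'.range :=
    card_eq_card_ker_mul_card_range ψ'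
  have eB : Nat.card Bt = Nat.card φ'.ker * Nat.card φ'.range :=
    card_eq_card_ker_mul_card_range φ'
  have eD : Nat.card Dt =
      Nat.card (Dt ⧸ (Ct.map ψ).addSubgroupOf Dt) *
        Nat.card ((Ct.map ψ).addSubgroupOf Dt) :=
    AddSubgroup.card_eq_card_quotient_mul_card_addSubgroup _
  rw [eC, eB, eD, hker, hrange, hkr]
  ring
end

section
/- Consider a commutative diagram of finite-dimensional real vector spaces with exact rows (E_A): 0 → A₁ → A₂ → A₃ → 0, (E_B): 0 → B₁ → B₂ → B₃ → 0, (E_C): 0 → C₁ → C₂ → C₃ → 0 and exact columns (E_i): 0 → A_i → B_i → C_i → 0 for i = 1,2,3. Fix ordered bases of all nine spaces, and for each of the six short exact sequences choose an arbitrary ℝ-linear section of its surjection. Then |det θ(E₂)| · |det θ(E_A)| · |det θ(E_C)| = |det θ(E₁)| · |det θ(E₃)| · |det θ(E_B)|, where θ(E) denotes the isomorphism θ_s of the sequence E associated with its chosen section and determinants are taken with respect to the chosen bases. -/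
open LinearMap Matrix

namespace Stmt6Aux

variable {U V W : Type} [AddCommGroup U] [AddCommGroup V] [AddCommGroup W]
  [Module ℝ U] [Module ℝ V] [Module ℝ W]

lemma exists_factor (f : U →ₗ[ℝ] V) (hf : Function.Injective f) (φ : W →ₗ[ℝ] V)
    (h : ∀ w, φ w ∈ LinearMap.range f) : ∃ d : W →ₗ[ℝ] U, f ∘ₗ d = φ := by
  refine ⟨(LinearEquiv.ofInjective f hf).symm.toLinearMap ∘ₗ
    φ.codRestrict (LinearMap.range f) h, ?_⟩
  ext w
  have h2 : ∀ y : LinearMap.range f, f ((LinearEquiv.ofInjective f hf).symm y) = y := by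
    intro y
    conv_rhs => rw [← (LinearEquiv.ofInjective f hf).apply_symm_apply y]
    rw [LinearEquiv.ofInjective_apply]
  simpa using h2 ⟨φ w, h w⟩

lemma coprod_bijective (f : U →ₗ[ℝ] V) (g : V →ₗ[ℝ] W) (s : W →ₗ[ℝ] V)
    (hf : Function.Injective f) (hex : LinearMap.range f = LinearMap.ker g)
    (hs : g ∘ₗ s = LinearMap.id) : Function.Bijective (f.coprod s) := by
  have hgf : ∀ u, g (f u) = 0 := by
    intro u
    have : f u ∈ LinearMap.ker g := hex ▸ LinearMap.mem_range_self f u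
    exact this
  have hgs : ∀ w, g (s w) = w := fun w => LinearMap.congr_fun hs w
  constructor
  · intro ⟨u, w⟩ ⟨u', w'⟩ hcp
    simp only [coprod_apply] at hcp
    have hw : w = w' := by
      have := congrArg g hcp
      simpa [map_add, hgf, hgs] using this
    subst hw
    exact Prod.ext (hf (add_right_cancel hcp)) rfl
  · intro v
    have hmem : v - s (g v) ∈ LinearMap.range f := by
      rw [hex]
      simp [LinearMap.mem_ker, map_sub, hgs]
    obtain ⟨u, hu⟩ := hmem
    exact ⟨(u, g v), by simp [coprod_apply, hu]⟩

variable {ιU ιW : Type} [Fintype ιU] [Fintype ιW] [DecidableEq ιU] [DecidableEq ιW]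

lemma toMatrix_prodMap {U' W' : Type} [AddCommGroup U'] [AddCommGroup W']
    [Module ℝ U'] [Module ℝ W'] {κU κW : Type}
    [Fintype κU] [Fintype κW] [DecidableEq κU] [DecidableEq κW]
    (b : Module.Basis ιU ℝ U) (b' : Module.Basis ιW ℝ W) (c : Module.Basis κU ℝ U') (c' : Module.Basis κW ℝ W')
    (φ : U →ₗ[ℝ] U') (ψ : W →ₗ[ℝ] W') :
    LinearMap.toMatrix (b.prod b') (c.prod c') (φ.prodMap ψ) =
      Matrix.fromBlocks (LinearMap.toMatrix b c φ) 0 0 (LinearMap.toMatrix b' c' ψ) := by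
  ext i j
  rcases i with i | i <;> rcases j with j | j <;>
    simp [LinearMap.toMatrix_apply, Module.Basis.prod_apply, fromBlocks, Finsupp.single_apply, Matrix.one_apply, eq_comm]

lemma det_coprod_section_eq
    (bU : Module.Basis ιU ℝ U) (bW : Module.Basis ιW ℝ W) (bV : Module.Basis (ιU ⊕ ιW) ℝ V)
    (f : U →ₗ[ℝ] V) (g : V →ₗ[ℝ] W) (s s' : W →ₗ[ℝ] V)
    (hf : Function.Injective f) (hex : LinearMap.range f = LinearMap.ker g)
    (hs : g ∘ₗ s = LinearMap.id) (hs' : g ∘ₗ s' = LinearMap.id) :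
    (LinearMap.toMatrix (bU.prod bW) bV (f.coprod s)).det
      = (LinearMap.toMatrix (bU.prod bW) bV (f.coprod s')).det := by
  have hmem : ∀ w, (s - s') w ∈ LinearMap.range f := by
    intro w
    rw [hex]
    have h1 : g (s w) = w := LinearMap.congr_fun hs w
    have h2 : g (s' w) = w := LinearMap.congr_fun hs' w
    simp [LinearMap.mem_ker, map_sub, h1, h2]
  obtain ⟨d, hd⟩ := exists_factor f hf (s - s') hmem
  have hdw : ∀ w, f (d w) = s w - s' w := by
    intro w
    have := LinearMap.congr_fun hd w
    simpa using this
  set shear : (U × W) →ₗ[ℝ] U × W :=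
    LinearMap.prod (LinearMap.fst ℝ U W + d ∘ₗ LinearMap.snd ℝ U W) (LinearMap.snd ℝ U W)
    with hshear
  have hcomp : f.coprod s = (f.coprod s') ∘ₗ shear := by
    ext x
    · simp [hshear, coprod_apply]
    · simp [hshear, coprod_apply, hdw]
  have hmat : LinearMap.toMatrix (bU.prod bW) (bU.prod bW) shear =
      Matrix.fromBlocks 1 (LinearMap.toMatrix bW bU d) 0 1 := by
    ext i j
    rcases i with i | i <;> rcases j with j | j <;>
      simp [LinearMap.toMatrix_apply, Module.Basis.prod_apply, fromBlocks, hshear, Finsupp.single_apply, Matrix.one_apply, eq_comm]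
  rw [hcomp, LinearMap.toMatrix_comp (bU.prod bW) (bU.prod bW) bV, Matrix.det_mul, hmat,
    Matrix.det_fromBlocks_zero₂₁]
  simp

end Stmt6Aux




/-- For a commutative `3 × 3` diagram of finite-dimensional real vector
spaces with exact rows `(E_A), (E_B), (E_C)` and exact columns `(E₁), (E₂), (E₃)`,
chosen bases of the nine spaces and chosen sections of the six surjections, one has
`|det θ(E₂)| ⬝ |det θ(E_A)| ⬝ |det θ(E_C)| = |det θ(E₁)| ⬝ |det θ(E₃)| ⬝ |det θ(E_B)|`.
(The basis of `B₂` used for the row `(E_B)` is the chosen one, with its index set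
re-identified along the canonical bijection
`(ιa₁ ⊕ ιa₃) ⊕ (ιc₁ ⊕ ιc₃) ≃ (ιa₁ ⊕ ιc₁) ⊕ (ιa₃ ⊕ ιc₃)`.) -/
theorem stmt_6 {A₁ A₂ A₃ B₁ B₂ B₃ C₁ C₂ C₃ : Type}
    [AddCommGroup A₁] [AddCommGroup A₂] [AddCommGroup A₃]
    [AddCommGroup B₁] [AddCommGroup B₂] [AddCommGroup B₃]
    [AddCommGroup C₁] [AddCommGroup C₂] [AddCommGroup C₃]
    [Module ℝ A₁] [Module ℝ A₂] [Module ℝ A₃]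
    [Module ℝ B₁] [Module ℝ B₂] [Module ℝ B₃]
    [Module ℝ C₁] [Module ℝ C₂] [Module ℝ C₃]
    [FiniteDimensional ℝ A₁] [FiniteDimensional ℝ A₂] [FiniteDimensional ℝ A₃]
    [FiniteDimensional ℝ B₁] [FiniteDimensional ℝ B₂] [FiniteDimensional ℝ B₃]
    [FiniteDimensional ℝ C₁] [FiniteDimensional ℝ C₂] [FiniteDimensional ℝ C₃]
    -- rows
    (fA : A₁ →ₗ[ℝ] A₂) (gA : A₂ →ₗ[ℝ] A₃)
    (fB : B₁ →ₗ[ℝ] B₂) (gB : B₂ →ₗ[ℝ] B₃)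
    (fC : C₁ →ₗ[ℝ] C₂) (gC : C₂ →ₗ[ℝ] C₃)
    -- columns
    (p₁ : A₁ →ₗ[ℝ] B₁) (q₁ : B₁ →ₗ[ℝ] C₁)
    (p₂ : A₂ →ₗ[ℝ] B₂) (q₂ : B₂ →ₗ[ℝ] C₂)
    (p₃ : A₃ →ₗ[ℝ] B₃) (q₃ : B₃ →ₗ[ℝ] C₃)
    -- exactness of the rows
    (hfA : Function.Injective fA) (hgA : Function.Surjective gA)
    (hexA : LinearMap.range fA = LinearMap.ker gA)
    (hfB : Function.Injective fB) (hgB : Function.Surjective gB)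
    (hexB : LinearMap.range fB = LinearMap.ker gB)
    (hfC : Function.Injective fC) (hgC : Function.Surjective gC)
    (hexC : LinearMap.range fC = LinearMap.ker gC)
    -- exactness of the columns
    (hp₁ : Function.Injective p₁) (hq₁ : Function.Surjective q₁)
    (hex₁ : LinearMap.range p₁ = LinearMap.ker q₁)
    (hp₂ : Function.Injective p₂) (hq₂ : Function.Surjective q₂)
    (hex₂ : LinearMap.range p₂ = LinearMap.ker q₂)
    (hp₃ : Function.Injective p₃) (hq₃ : Function.Surjective q₃)
    (hex₃ : LinearMap.range p₃ = LinearMap.ker q₃)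
    -- commutativity of the four squares
    (hsq₁ : p₂ ∘ₗ fA = fB ∘ₗ p₁) (hsq₂ : p₃ ∘ₗ gA = gB ∘ₗ p₂)
    (hsq₃ : q₂ ∘ₗ fB = fC ∘ₗ q₁) (hsq₄ : q₃ ∘ₗ gB = gC ∘ₗ q₂)
    -- chosen bases
    {ιa₁ ιa₃ ιc₁ ιc₃ : Type}
    [Fintype ιa₁] [Fintype ιa₃] [Fintype ιc₁] [Fintype ιc₃]
    [DecidableEq ιa₁] [DecidableEq ιa₃] [DecidableEq ιc₁] [DecidableEq ιc₃]
    (bA₁ : Module.Basis ιa₁ ℝ A₁) (bA₂ : Module.Basis (ιa₁ ⊕ ιa₃) ℝ A₂) (bA₃ : Module.Basis ιa₃ ℝ A₃)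
    (bC₁ : Module.Basis ιc₁ ℝ C₁) (bC₂ : Module.Basis (ιc₁ ⊕ ιc₃) ℝ C₂) (bC₃ : Module.Basis ιc₃ ℝ C₃)
    (bB₁ : Module.Basis (ιa₁ ⊕ ιc₁) ℝ B₁) (bB₃ : Module.Basis (ιa₃ ⊕ ιc₃) ℝ B₃)
    (bB₂ : Module.Basis ((ιa₁ ⊕ ιa₃) ⊕ (ιc₁ ⊕ ιc₃)) ℝ B₂)
    -- chosen sections of the six surjections
    (sA : A₃ →ₗ[ℝ] A₂) (hsA : gA ∘ₗ sA = LinearMap.id)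
    (sB : B₃ →ₗ[ℝ] B₂) (hsB : gB ∘ₗ sB = LinearMap.id)
    (sC : C₃ →ₗ[ℝ] C₂) (hsC : gC ∘ₗ sC = LinearMap.id)
    (s₁ : C₁ →ₗ[ℝ] B₁) (hs₁ : q₁ ∘ₗ s₁ = LinearMap.id)
    (s₂ : C₂ →ₗ[ℝ] B₂) (hs₂ : q₂ ∘ₗ s₂ = LinearMap.id)
    (s₃ : C₃ →ₗ[ℝ] B₃) (hs₃ : q₃ ∘ₗ s₃ = LinearMap.id) :
    |(LinearMap.toMatrix (bA₂.prod bC₂) bB₂ (p₂.coprod s₂)).det| *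
      |(LinearMap.toMatrix (bA₁.prod bA₃) bA₂ (fA.coprod sA)).det| *
      |(LinearMap.toMatrix (bC₁.prod bC₃) bC₂ (fC.coprod sC)).det| =
    |(LinearMap.toMatrix (bA₁.prod bC₁) bB₁ (p₁.coprod s₁)).det| *
      |(LinearMap.toMatrix (bA₃.prod bC₃) bB₃ (p₃.coprod s₃)).det| *
      |(LinearMap.toMatrix (bB₁.prod bB₃)
          (bB₂.reindex (Equiv.sumSumSumComm ιa₁ ιa₃ ιc₁ ιc₃)) (fB.coprod sB)).det| := by
  classical
  -- pointwise facts
  have hgBsB : ∀ x, gB (sB x) = x := fun x => by simpa using LinearMap.congr_fun hsB x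
  have hq₃s₃ : ∀ x, q₃ (s₃ x) = x := fun x => by simpa using LinearMap.congr_fun hs₃ x
  have hgCsC : ∀ x, gC (sC x) = x := fun x => by simpa using LinearMap.congr_fun hsC x
  have hq₁s₁ : ∀ x, q₁ (s₁ x) = x := fun x => by simpa using LinearMap.congr_fun hs₁ x
  have hgAsA : ∀ x, gA (sA x) = x := fun x => by simpa using LinearMap.congr_fun hsA x
  have hsq₄' : ∀ x, q₃ (gB x) = gC (q₂ x) := fun x => by simpa using LinearMap.congr_fun hsq₄ x
  have hsq₃' : ∀ x, q₂ (fB x) = fC (q₁ x) := fun x => by simpa using LinearMap.congr_fun hsq₃ x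
  have hsq₂' : ∀ x, p₃ (gA x) = gB (p₂ x) := fun x => by simpa using LinearMap.congr_fun hsq₂ x
  have hsq₁' : ∀ x, p₂ (fA x) = fB (p₁ x) := fun x => by simpa using LinearMap.congr_fun hsq₁ x
  have hgBfB : ∀ x, gB (fB x) = 0 := by
    intro x
    have : fB x ∈ LinearMap.ker gB := hexB ▸ LinearMap.mem_range_self fB x
    exact this
  -- the correction map d and the common lift t
  set δ : C₃ →ₗ[ℝ] C₂ := (q₂ ∘ₗ (sB ∘ₗ s₃)) - sC with hδ
  have hδmem : ∀ c, δ c ∈ LinearMap.range fC := by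
    intro c
    rw [hexC]
    have : gC (δ c) = 0 := by
      simp [hδ, map_sub, ← hsq₄', hgBsB, hq₃s₃, hgCsC]
    exact this
  obtain ⟨d, hd⟩ := Stmt6Aux.exists_factor fC hfC δ hδmem
  have hdc : ∀ c, fC (d c) = q₂ (sB (s₃ c)) - sC c := fun c => by
    simpa [hδ] using LinearMap.congr_fun hd c
  set t : C₃ →ₗ[ℝ] B₂ := (sB ∘ₗ s₃) - (fB ∘ₗ (s₁ ∘ₗ d)) with ht
  have hq₂t : ∀ c, q₂ (t c) = sC c := by
    intro c
    simp [ht, map_sub, hsq₃', hq₁s₁, hdc, sub_sub_cancel]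
  have hgBt : ∀ c, gB (t c) = s₃ c := by
    intro c
    simp [ht, map_sub, hgBfB, hgBsB]
  -- the two compatible sections
  set eC : (C₁ × C₃) ≃ₗ[ℝ] C₂ :=
    LinearEquiv.ofBijective (fC.coprod sC) (Stmt6Aux.coprod_bijective fC gC sC hfC hexC hsC)
    with heC
  set e₃ : (A₃ × C₃) ≃ₗ[ℝ] B₃ :=
    LinearEquiv.ofBijective (p₃.coprod s₃) (Stmt6Aux.coprod_bijective p₃ q₃ s₃ hp₃ hex₃ hs₃)
    with he₃
  set s₂' : C₂ →ₗ[ℝ] B₂ := ((fB ∘ₗ s₁).coprod t) ∘ₗ (eC.symm : C₂ →ₗ[ℝ] C₁ × C₃) with hs₂'def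
  set sB' : B₃ →ₗ[ℝ] B₂ := ((p₂ ∘ₗ sA).coprod t) ∘ₗ (e₃.symm : B₃ →ₗ[ℝ] A₃ × C₃) with hsB'def
  have hs₂'sec : q₂ ∘ₗ s₂' = LinearMap.id := by
    ext c
    have e1 : fC (eC.symm c).1 + sC (eC.symm c).2 = c := eC.apply_symm_apply c
    simp only [LinearMap.comp_apply, hs₂'def, LinearMap.id_apply, LinearEquiv.coe_coe,
      LinearMap.coprod_apply, map_add, hsq₃', hq₁s₁, hq₂t]
    exact e1
  have hsB'sec : gB ∘ₗ sB' = LinearMap.id := by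
    ext b
    have e1 : p₃ (e₃.symm b).1 + s₃ (e₃.symm b).2 = b := e₃.apply_symm_apply b
    simp only [LinearMap.comp_apply, hsB'def, LinearMap.id_apply, LinearEquiv.coe_coe,
      LinearMap.coprod_apply, map_add, ← hsq₂', hgAsA, hgBt]
    exact e1
  -- the key commutation identity
  have hkey : (p₂.coprod s₂') ∘ₗ ((fA.coprod sA).prodMap (fC.coprod sC))
      = (fB.coprod sB') ∘ₗ (((p₁.coprod s₁).prodMap (p₃.coprod s₃)) ∘ₗ
          (LinearEquiv.prodProdProdComm ℝ A₁ A₃ C₁ C₃ : _ →ₗ[ℝ] _)) := by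
    apply LinearMap.ext
    rintro ⟨⟨a₁, a₃⟩, c₁, c₃⟩
    have h1 : s₂' (fC c₁ + sC c₃) = fB (s₁ c₁) + t c₃ := by
      have hx : eC.symm (fC c₁ + sC c₃) = (c₁, c₃) := by
        have : fC c₁ + sC c₃ = eC (c₁, c₃) := by simp [heC, LinearMap.coprod_apply]
        rw [this, eC.symm_apply_apply]
      simp [hs₂'def, hx, LinearMap.coprod_apply]
    have h2 : sB' (p₃ a₃ + s₃ c₃) = p₂ (sA a₃) + t c₃ := by
      have hx : e₃.symm (p₃ a₃ + s₃ c₃) = (a₃, c₃) := by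
        have : p₃ a₃ + s₃ c₃ = e₃ (a₃, c₃) := by simp [he₃, LinearMap.coprod_apply]
        rw [this, e₃.symm_apply_apply]
      simp [hsB'def, hx, LinearMap.coprod_apply]
    simp only [LinearMap.comp_apply, LinearMap.prodMap_apply, LinearMap.coprod_apply,
      LinearEquiv.coe_coe, LinearEquiv.prodProdProdComm_apply, map_add, h1, h2, hsq₁']
    abel
  -- notation for bases and the permutation
  set σe := Equiv.sumSumSumComm ιa₁ ιa₃ ιc₁ ιc₃ with hσe
  set bP := (bA₁.prod bA₃).prod (bC₁.prod bC₃) with hbP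
  set bQ := (bA₁.prod bC₁).prod (bA₃.prod bC₃) with hbQ
  set bb := bB₁.prod bB₃ with hbb
  set bb' := bb.reindex σe.symm with hbb'
  -- shuffle sends bP-vectors to bQ-vectors along σe
  have hbasis : ∀ j, (LinearEquiv.prodProdProdComm ℝ A₁ A₃ C₁ C₃) (bP j) = bQ (σe j) := by
    rintro ((i | i) | (i | i)) <;>
      simp [hbP, hbQ, hσe, Module.Basis.prod_apply, LinearEquiv.prodProdProdComm_apply,
        Equiv.sumSumSumComm, Prod.ext_iff]
  -- determinant of the left composite
  have hL : (LinearMap.toMatrix bP bB₂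
        ((p₂.coprod s₂') ∘ₗ ((fA.coprod sA).prodMap (fC.coprod sC)))).det
      = (LinearMap.toMatrix (bA₂.prod bC₂) bB₂ (p₂.coprod s₂')).det *
        ((LinearMap.toMatrix (bA₁.prod bA₃) bA₂ (fA.coprod sA)).det *
         (LinearMap.toMatrix (bC₁.prod bC₃) bC₂ (fC.coprod sC)).det) := by
    rw [LinearMap.toMatrix_comp bP (bA₂.prod bC₂) bB₂, Matrix.det_mul,
      Stmt6Aux.toMatrix_prodMap, Matrix.det_fromBlocks_zero₂₁]
  -- determinant of the right composite
  have hT : (LinearMap.toMatrix bP bb'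
        (((p₁.coprod s₁).prodMap (p₃.coprod s₃)) ∘ₗ
          (LinearEquiv.prodProdProdComm ℝ A₁ A₃ C₁ C₃ : _ →ₗ[ℝ] _))).det
      = (LinearMap.toMatrix (bA₁.prod bC₁) bB₁ (p₁.coprod s₁)).det *
        (LinearMap.toMatrix (bA₃.prod bC₃) bB₃ (p₃.coprod s₃)).det := by
    have hmat : LinearMap.toMatrix bP bb'
        (((p₁.coprod s₁).prodMap (p₃.coprod s₃)) ∘ₗ
          (LinearEquiv.prodProdProdComm ℝ A₁ A₃ C₁ C₃ : _ →ₗ[ℝ] _))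
        = (LinearMap.toMatrix bQ bb ((p₁.coprod s₁).prodMap (p₃.coprod s₃))).submatrix σe σe := by
      ext i j
      simp only [LinearMap.toMatrix_apply, Matrix.submatrix_apply, LinearMap.comp_apply,
        LinearEquiv.coe_coe, hbb', Module.Basis.repr_reindex_apply, Equiv.symm_symm, hbasis j]
    rw [hmat, Matrix.det_submatrix_equiv_self, Stmt6Aux.toMatrix_prodMap,
      Matrix.det_fromBlocks_zero₂₁]
  -- reindexing on B₂-side
  have hR : ∀ θ : (B₁ × B₃) →ₗ[ℝ] B₂,
      (LinearMap.toMatrix bb (bB₂.reindex σe) θ).det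
        = (LinearMap.toMatrix bb' bB₂ θ).det := by
    intro θ
    have hmat : LinearMap.toMatrix bb (bB₂.reindex σe) θ
        = (LinearMap.toMatrix bb' bB₂ θ).submatrix σe.symm σe.symm := by
      ext i j
      simp only [LinearMap.toMatrix_apply, Matrix.submatrix_apply, hbb',
        Module.Basis.repr_reindex_apply, Module.Basis.reindex_apply, Equiv.symm_symm, Equiv.apply_symm_apply]
    rw [hmat, Matrix.det_submatrix_equiv_self]
  -- section independence
  have hsec₂ : (LinearMap.toMatrix (bA₂.prod bC₂) bB₂ (p₂.coprod s₂)).det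
      = (LinearMap.toMatrix (bA₂.prod bC₂) bB₂ (p₂.coprod s₂')).det :=
    Stmt6Aux.det_coprod_section_eq bA₂ bC₂ bB₂ p₂ q₂ s₂ s₂' hp₂ hex₂ hs₂ hs₂'sec
  have hsecB : (LinearMap.toMatrix bb (bB₂.reindex σe) (fB.coprod sB')).det
      = (LinearMap.toMatrix bb (bB₂.reindex σe) (fB.coprod sB)).det :=
    Stmt6Aux.det_coprod_section_eq bB₁ bB₃ (bB₂.reindex σe) fB gB sB' sB hfB hexB hsB'sec hsB
  -- main determinant identity
  have main : (LinearMap.toMatrix (bA₂.prod bC₂) bB₂ (p₂.coprod s₂)).det *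
      (LinearMap.toMatrix (bA₁.prod bA₃) bA₂ (fA.coprod sA)).det *
      (LinearMap.toMatrix (bC₁.prod bC₃) bC₂ (fC.coprod sC)).det
      = (LinearMap.toMatrix (bA₁.prod bC₁) bB₁ (p₁.coprod s₁)).det *
        (LinearMap.toMatrix (bA₃.prod bC₃) bB₃ (p₃.coprod s₃)).det *
        (LinearMap.toMatrix bb (bB₂.reindex σe) (fB.coprod sB)).det := by
    rw [hsec₂, ← hsecB, hR (fB.coprod sB')]
    have hcompR : (LinearMap.toMatrix bP bB₂
        ((fB.coprod sB') ∘ₗ (((p₁.coprod s₁).prodMap (p₃.coprod s₃)) ∘ₗ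
          (LinearEquiv.prodProdProdComm ℝ A₁ A₃ C₁ C₃ : _ →ₗ[ℝ] _)))).det
        = (LinearMap.toMatrix bb' bB₂ (fB.coprod sB')).det *
          ((LinearMap.toMatrix (bA₁.prod bC₁) bB₁ (p₁.coprod s₁)).det *
           (LinearMap.toMatrix (bA₃.prod bC₃) bB₃ (p₃.coprod s₃)).det) := by
      rw [LinearMap.toMatrix_comp bP bb' bB₂, Matrix.det_mul, hT]
    have := hL
    rw [hkey, hcompR] at this
    linarith [this]
  calc |(LinearMap.toMatrix (bA₂.prod bC₂) bB₂ (p₂.coprod s₂)).det| *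
      |(LinearMap.toMatrix (bA₁.prod bA₃) bA₂ (fA.coprod sA)).det| *
      |(LinearMap.toMatrix (bC₁.prod bC₃) bC₂ (fC.coprod sC)).det|
      = |(LinearMap.toMatrix (bA₂.prod bC₂) bB₂ (p₂.coprod s₂)).det *
          (LinearMap.toMatrix (bA₁.prod bA₃) bA₂ (fA.coprod sA)).det *
          (LinearMap.toMatrix (bC₁.prod bC₃) bC₂ (fC.coprod sC)).det| := by
        rw [abs_mul, abs_mul]
    _ = |(LinearMap.toMatrix (bA₁.prod bC₁) bB₁ (p₁.coprod s₁)).det *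
          (LinearMap.toMatrix (bA₃.prod bC₃) bB₃ (p₃.coprod s₃)).det *
          (LinearMap.toMatrix bb (bB₂.reindex σe) (fB.coprod sB)).det| := by rw [main]
    _ = _ := by rw [abs_mul, abs_mul]
end

section
/- Let L = ℚ(ζ₁₂) and K = ℚ(i) ⊆ L where i = ζ³. The norm map N_{L/K} : O_L^× → O_K^× on unit groups is surjective: every unit of ℤ[i] (i.e. every element of {1, i, −1, −i}) is the norm of a unit of O_L. Equivalently, the Tate cohomology group Ĥ⁰(Gal(L/K), O_L^×) = O_K^× / N_{L/K}(O_L^×) is trivial. -/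
open NumberField IntermediateField Polynomial

set_option maxHeartbeats 1000000
set_option synthInstance.maxHeartbeats 400000

/-- If a field `F` of characteristic zero and finite dimension over `ℚ` contains a primitive
`r`-th root of unity, then `φ(r)` divides `[F : ℚ]`. -/
lemma aux_totient_dvd {F : Type*} [Field F] [CharZero F] [FiniteDimensional ℚ F]
    {z : F} {r : ℕ} (hr : 0 < r) (hz : IsPrimitiveRoot z r) :
    Nat.totient r ∣ Module.finrank ℚ F := by
  have hint : IsIntegral ℚ z := (hz.isIntegral hr).tower_top
  have h1 : Module.finrank ℚ ℚ⟮z⟯ = Nat.totient r := by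
    rw [IntermediateField.adjoin.finrank hint, ← cyclotomic_eq_minpoly_rat hz hr,
      natDegree_cyclotomic]
  exact h1 ▸ ⟨Module.finrank ℚ⟮z⟯ F, (Module.finrank_mul_finrank ℚ ℚ⟮z⟯ F).symm⟩

/-- In a quadratic field containing a primitive fourth root of unity `j`, every element of
finite (multiplicative) order is a power of `j`. -/
lemma aux_classify {F : Type*} [Field F] [CharZero F] [FiniteDimensional ℚ F]
    (hrank : Module.finrank ℚ F = 2) {j x : F} (hj : IsPrimitiveRoot j 4)
    (hx : IsOfFinOrder x) : ∃ k : ℕ, x = j ^ k := by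
  set m := orderOf x with hm_def
  have hm : 0 < m := hx.orderOf_pos
  have hprim : IsPrimitiveRoot x m := IsPrimitiveRoot.orderOf x
  -- there are no primitive roots of unity of order r with totient r > 2
  have hno : ∀ (z : F) (r : ℕ), 0 < r → IsPrimitiveRoot z r → Nat.totient r ∣ 2 := by
    intro z r hr hz
    have := aux_totient_dvd hr hz
    rwa [hrank] at this
  have h3 : ¬ (3 ∣ m) := by
    intro h3
    have hz3 : IsPrimitiveRoot (x ^ (m / 3)) 3 := hprim.pow hm (Nat.div_mul_cancel h3).symm
    have ho3 : orderOf (x ^ (m / 3)) = 3 := (hz3.eq_orderOf).symm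
    have ho4 : orderOf j = 4 := (hj.eq_orderOf).symm
    have h12 : orderOf (x ^ (m / 3) * j) = 12 := by
      rw [(Commute.all _ j).orderOf_mul_eq_mul_orderOf_of_coprime (by rw [ho3, ho4]; decide),
        ho3, ho4]
    have := hno _ 12 (by norm_num) (h12 ▸ IsPrimitiveRoot.orderOf (x ^ (m / 3) * j))
    rw [(by decide : Nat.totient 12 = 4)] at this
    norm_num at this
  have h8 : ¬ (8 ∣ m) := by
    intro h8
    have hz8 : IsPrimitiveRoot (x ^ (m / 8)) 8 := hprim.pow hm (Nat.div_mul_cancel h8).symm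
    have := hno _ 8 (by norm_num) hz8
    rw [(by decide : Nat.totient 8 = 4)] at this
    norm_num at this
  have hpow : m ∣ 4 := by
    have h2 : ∀ {d : ℕ}, Nat.Prime d → d ∣ m → d = 2 := by
      intro d hd hdm
      by_contra hne
      have hzd : IsPrimitiveRoot (x ^ (m / d)) d := hprim.pow hm (Nat.div_mul_cancel hdm).symm
      have hdvd := hno _ d hd.pos hzd
      rw [Nat.totient_prime hd] at hdvd
      have hle : d - 1 ≤ 2 := Nat.le_of_dvd (by norm_num) hdvd
      have hd2 : 2 ≤ d := hd.two_le
      have hd3 : d = 2 ∨ d = 3 := by omega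
      rcases hd3 with rfl | rfl
      · exact hne rfl
      · exact h3 hdm
    have := Nat.eq_prime_pow_of_unique_prime_dvd hm.ne' h2
    set l := m.primeFactorsList.length with hl
    have hlle : l ≤ 2 := by
      by_contra hlt
      push_neg at hlt
      exact h8 (this ▸ pow_dvd_pow 2 hlt)
    calc m = 2 ^ l := this
    _ ∣ 2 ^ 2 := pow_dvd_pow 2 hlle
  have hx4 : x ^ 4 = 1 := orderOf_dvd_iff_pow_eq_one.mp hpow
  obtain ⟨k, _, hk⟩ := hj.eq_pow_of_pow_eq_one hx4
  exact ⟨k, hk.symm⟩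

/-- Let `L = ℚ(ζ₁₂)` and `K = ℚ(i) ⊆ L` where `i = ζ³`. The norm map
`N_{L/K} : O_L^× → O_K^×` is surjective: every unit of `O_K = ℤ[i]` is the norm of a unit
of `O_L`. Equivalently, `Ĥ⁰(Gal(L/K), O_L^×) = O_K^× / N_{L/K}(O_L^×)` is trivial. -/
theorem stmt_12 (L : Type) [Field L] [NumberField L] [IsCyclotomicExtension {12} ℚ L]
    (ζ : L) (hζ : IsPrimitiveRoot ζ 12) :
    ∀ v : (𝓞 ℚ⟮ζ ^ 3⟯)ˣ, ∃ u : (𝓞 L)ˣ,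
      Algebra.norm ℚ⟮ζ ^ 3⟯ (algebraMap (𝓞 L) L u : L) =
        (algebraMap (𝓞 ℚ⟮ζ ^ 3⟯) ℚ⟮ζ ^ 3⟯ v : ℚ⟮ζ ^ 3⟯) := by
  -- basic facts about `ζ`
  have hz12 : ζ ^ 12 = 1 := hζ.pow_eq_one
  have h4 : IsPrimitiveRoot (ζ ^ 3) 4 := hζ.pow (by norm_num) (by norm_num)
  have h6 : ζ ^ 6 = -1 :=
    (hζ.pow (by norm_num) (by norm_num : (12 : ℕ) = 6 * 2)).eq_neg_one_of_two_right
  have hz4ne : ζ ^ 4 ≠ 1 := hζ.pow_ne_one_of_pos_of_lt (by norm_num) (by norm_num)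
  have hΦ : ζ ^ 4 = ζ ^ 2 - 1 := by
    have hfac : (ζ ^ 2 + 1) * (ζ ^ 4 - ζ ^ 2 + 1) = 0 := by linear_combination h6
    have h2ne : ζ ^ 2 + 1 ≠ 0 := by
      intro h
      apply hz4ne
      linear_combination (ζ ^ 2 - 1) * h
    have := (mul_eq_zero.mp hfac).resolve_left h2ne
    linear_combination this
  -- the field `K = ℚ(i)` and its generator `i₀ = ζ ^ 3`
  set K : IntermediateField ℚ L := ℚ⟮ζ ^ 3⟯ with hK
  intro v
  set i₀ : K := IntermediateField.AdjoinSimple.gen ℚ (ζ ^ 3) with hi₀def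
  have hcoe : (algebraMap K L) i₀ = ζ ^ 3 := IntermediateField.AdjoinSimple.algebraMap_gen ℚ (ζ ^ 3)
  have hinj : Function.Injective (algebraMap K L) := (algebraMap K L).injective
  have hi₀ : IsPrimitiveRoot i₀ 4 := by
    apply IsPrimitiveRoot.of_map_of_injective (f := (algebraMap K L)) _ hinj
    rwa [hcoe]
  have hrankK : Module.finrank ℚ K = 2 := by
    rw [hK, IntermediateField.adjoin.finrank ((h4.isIntegral (by norm_num)).tower_top),
      ← cyclotomic_eq_minpoly_rat h4 (by norm_num), natDegree_cyclotomic,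
      (by decide : Nat.totient 4 = 2)]
  have hii : i₀ ^ 2 = -1 := by
    apply hinj
    rw [map_pow, hcoe, map_neg, map_one, ← pow_mul]
    exact h6
  -- all infinite places of `K` are complex, and there is exactly one of them
  have hmult : ∀ w : InfinitePlace K, w.mult = 2 := by
    intro w
    rw [NumberField.InfinitePlace.mult, if_neg]
    intro hreal
    have hφ : ComplexEmbedding.IsReal w.embedding := NumberField.InfinitePlace.isReal_iff.mp hreal
    set φ := w.embedding
    have hconj : (starRingEnd ℂ) (φ i₀) = φ i₀ := RingHom.congr_fun hφ i₀
    have him : (φ i₀).im = 0 := Complex.conj_eq_iff_im.mp hconj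
    have hsq : (φ i₀) ^ 2 = -1 := by rw [← map_pow, hii, map_neg, map_one]
    have := congrArg Complex.re hsq
    simp [pow_two, Complex.mul_re, him] at this
    nlinarith [sq_nonneg (φ i₀).re]
  have hcard : Fintype.card (InfinitePlace K) = 1 := by
    have hsum := NumberField.InfinitePlace.sum_mult_eq (K := K)
    rw [hrankK, Finset.sum_congr rfl (fun w _ => hmult w), Finset.sum_const, smul_eq_mul] at hsum
    rw [Fintype.card]
    omega
  -- the unit `v` is a torsion unit
  have habs : |Algebra.norm ℚ ((algebraMap (𝓞 K) K) (v : 𝓞 K))| = 1 := by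
    have h := NumberField.isUnit_iff_norm.mp (Units.isUnit v)
    rwa [RingOfIntegers.coe_norm] at h
  have hw1 : ∀ w : InfinitePlace K, w ((algebraMap (𝓞 K) K) (v : 𝓞 K)) = 1 := by
    intro w
    have hprod := NumberField.InfinitePlace.prod_eq_abs_norm ((algebraMap (𝓞 K) K) (v : 𝓞 K))
    rw [habs] at hprod
    obtain ⟨w₀, hw₀⟩ := Fintype.card_eq_one_iff.mp hcard
    rw [hw₀ w]
    have huniv : (Finset.univ : Finset (InfinitePlace K)) = {w₀} :=
      Finset.eq_singleton_iff_unique_mem.mpr ⟨Finset.mem_univ _, fun y _ => hw₀ y⟩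
    rw [huniv, Finset.prod_singleton, hmult w₀] at hprod
    have hnn : (0 : ℝ) ≤ w₀ ((algebraMap (𝓞 K) K) (v : 𝓞 K)) := apply_nonneg w₀ _
    have hprod' : w₀ ((algebraMap (𝓞 K) K) (v : 𝓞 K)) ^ 2 = 1 := by exact_mod_cast hprod
    nlinarith [hnn, hprod']
  have htors : v ∈ NumberField.Units.torsion K := (NumberField.Units.mem_torsion K).mpr hw1
  have hfin : IsOfFinOrder ((algebraMap (𝓞 K) K) (v : 𝓞 K)) := by
    obtain ⟨n, hn, hvn⟩ := isOfFinOrder_iff_pow_eq_one.mp htors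
    refine isOfFinOrder_iff_pow_eq_one.mpr ⟨n, hn, ?_⟩
    rw [← map_pow, ← Units.val_pow_eq_pow_val, hvn, Units.val_one, map_one]
  -- hence `v` is a power of `i₀`
  obtain ⟨k, hk⟩ := aux_classify hrankK hi₀ hfin
  -- `L = K(1 + ζ)`
  have hαint : IsIntegral K (1 + ζ) :=
    isIntegral_one.add ((hζ.isIntegral (by norm_num)).tower_top (A := K))
  have hLtop : (ℚ⟮ζ⟯ : IntermediateField ℚ L) = ⊤ := by
    have h1 : Algebra.adjoin ℚ ({ζ} : Set L) = ⊤ := by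
      have := IsCyclotomicExtension.adjoin_primitive_root_eq_top (n := 12) (A := ℚ) hζ
      exact this
    apply IntermediateField.toSubalgebra_injective
    rw [IntermediateField.top_toSubalgebra]
    exact top_unique (h1 ▸ IntermediateField.algebra_adjoin_le_adjoin ℚ {ζ})
  have htop : K⟮(1 + ζ : L)⟯ = ⊤ := by
    apply IntermediateField.restrictScalars_injective ℚ
    rw [IntermediateField.restrictScalars_top, eq_top_iff, ← hLtop,
      IntermediateField.adjoin_le_iff]
    intro y hy
    rw [Set.mem_singleton_iff] at hy
    rw [hy]
    have hmem : (1 + ζ) ∈ K⟮(1 + ζ : L)⟯ := IntermediateField.mem_adjoin_simple_self K _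
    have h1m : (1 : L) ∈ K⟮(1 + ζ : L)⟯ := one_mem _
    have := sub_mem hmem h1m
    simpa using this
  have hfinKL : Module.finrank K L = 2 := by
    have ht : Module.finrank ℚ K * Module.finrank K L = Module.finrank ℚ L :=
      Module.finrank_mul_finrank ℚ K L
    have hL4 : Module.finrank ℚ L = 4 := by
      rw [IsCyclotomicExtension.finrank (n := 12) L (Polynomial.cyclotomic.irreducible_rat
        (by norm_num))]
      decide
    rw [hrankK, hL4] at ht
    omega
  -- the minimal polynomial of `1 + ζ` over `K` is `X² - (2 + i)X + i`
  set p : Polynomial K := X ^ 2 - C (2 + i₀) * X + C i₀ with hp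
  have hform : p = C 1 * X ^ 2 + C (-(2 + i₀)) * X + C i₀ := by
    rw [hp, map_one, map_neg]; ring
  have hpdeg : p.natDegree = 2 := by
    rw [hform]
    exact Polynomial.natDegree_quadratic one_ne_zero
  have hpmonic : p.Monic := by
    rw [Polynomial.Monic, Polynomial.leadingCoeff, hpdeg, hp]
    simp [Polynomial.coeff_X]
  have hproot : (Polynomial.aeval (1 + ζ)) p = 0 := by
    rw [hp]
    simp only [map_add, map_sub, map_mul, map_pow, aeval_X, aeval_C, map_ofNat]
    rw [hcoe]
    linear_combination -hΦ
  have hmin : minpoly K (1 + ζ) = p := by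
    have hdvd : minpoly K (1 + ζ) ∣ p := minpoly.dvd K _ hproot
    have hmdeg : (minpoly K (1 + ζ)).natDegree = 2 := by
      rw [← IntermediateField.adjoin.finrank hαint, htop, IntermediateField.finrank_top']
      exact hfinKL
    exact Polynomial.eq_of_dvd_of_natDegree_le_of_leadingCoeff hdvd (by omega)
      (by rw [(minpoly.monic hαint).leadingCoeff, hpmonic.leadingCoeff])
  -- the relative norm of `1 + ζ` is `i₀`
  have hnorm : Algebra.norm K (1 + ζ) = i₀ := by
    set pb : PowerBasis K L := (IntermediateField.adjoin.powerBasis hαint).map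
      ((IntermediateField.equivOfEq htop).trans IntermediateField.topEquiv) with hpb
    have hgen : pb.gen = 1 + ζ := by
      simp [hpb, IntermediateField.adjoin.powerBasis]
    have hdim : pb.dim = 2 := by
      simp [hpb, IntermediateField.adjoin.powerBasis, hmin, hpdeg]
    have := Algebra.PowerBasis.norm_gen_eq_coeff_zero_minpoly pb
    rw [hgen, hdim, hmin, hp] at this
    rw [this]
    simp [coeff_X, coeff_C]
  -- `1 + ζ` is a unit of `𝓞 L`
  have hζint : IsIntegral ℤ ζ := hζ.isIntegral (by norm_num)
  have h1int : IsIntegral ℤ (1 + ζ) := isIntegral_one.add hζint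
  have h2int : IsIntegral ℤ ((1 + ζ ^ 5) * ((1 + ζ ^ 7) * (1 + ζ ^ 11))) := by
    refine IsIntegral.mul ?_ (IsIntegral.mul ?_ ?_) <;>
      exact isIntegral_one.add (hζint.pow _)
  have hab : (⟨1 + ζ, h1int⟩ : 𝓞 L) * ⟨(1 + ζ ^ 5) * ((1 + ζ ^ 7) * (1 + ζ ^ 11)), h2int⟩ = 1 := by
    ext
    push_cast
    show (1 + ζ) * ((1 + ζ ^ 5) * ((1 + ζ ^ 7) * (1 + ζ ^ 11))) = 1
    linear_combination (ζ + ζ ^ 3 + ζ ^ 5 + ζ ^ 6 + ζ ^ 7 + 2 * ζ ^ 8 + ζ ^ 10 + ζ ^ 12 +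
      ζ ^ 13 + ζ ^ 15 + ζ ^ 17 + ζ ^ 18 + ζ ^ 19 + ζ ^ 20) * hΦ
  set U : (𝓞 L)ˣ := Units.mkOfMulEqOne _ _ hab with hU
  have hUval : (algebraMap (𝓞 L) L) (U : 𝓞 L) = 1 + ζ := rfl
  -- conclusion: the unit `U ^ k` has norm `i₀ ^ k = v`
  refine ⟨U ^ k, ?_⟩
  have hval : (algebraMap (𝓞 L) L) ((U ^ k : (𝓞 L)ˣ) : 𝓞 L) = (1 + ζ) ^ k := by
    rw [Units.val_pow_eq_pow_val, map_pow, hUval]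
  rw [hval, map_pow, hnorm, hk]
end
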